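/- Let n be a positive integer, let M be a symmetric n×n real matrix, and let d be a real number with 0 < d < n such that M·𝟙 = d·𝟙, where 𝟙 ∈ ℝⁿ is the all-ones vector. Then rank(J_n − M) = rank M, where J_n is the n×n all-ones matrix. In particular, J_n − M is invertible if and only if M is invertible. -/

import Mathlib

open Matrix

/-- `𝒜_{n,d}`: 0/1 matrices with exactly `d` ones in every row and column. -/
def IsRegAdj (n d : ℕ) (A : Matrix (Fin n) (Fin n) ℝ) : Prop :=
  (∀ i j, A i j = 0 ∨ A i j = 1) ∧
  (∀ i, {j : Fin n | A i j = 1}.ncard = d) ∧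
  (∀ j, {i : Fin n | A i j = 1}.ncard = d)

/-- A simple switching can be performed in `(i, j, k, l)`. -/
def CanSwitch {n : ℕ} (A : Matrix (Fin n) (Fin n) ℝ) (i j k l : Fin n) : Prop :=
  A i k = 1 ∧ A j l = 1 ∧ A i l = 0 ∧ A j k = 0

/-- The matrix obtained from `A` by the simple switching in `(i, j, k, l)`. -/
def switch {n : ℕ} (A : Matrix (Fin n) (Fin n) ℝ) (i j k l : Fin n) :
    Matrix (Fin n) (Fin n) ℝ :=
  Matrix.of fun s t =>
    if (s = i ∧ t = k) ∨ (s = j ∧ t = l) then 0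
    else if (s = i ∧ t = l) ∨ (s = j ∧ t = k) then 1
    else A s t

/-- `F_{i,j}(A)`: the span of the rows of `A` other than the `i`-th and the `j`-th,
together with `R_i + R_j`. -/
def rowSpanF {n : ℕ} (A : Matrix (Fin n) (Fin n) ℝ) (i j : Fin n) :
    Submodule ℝ (Fin n → ℝ) :=
  Submodule.span ℝ (insert (A i + A j) {r : Fin n → ℝ | ∃ s, s ≠ i ∧ s ≠ j ∧ r = A s})

/-- Orthogonal complement w.r.t. the standard inner product on `ℝⁿ`. -/
def perp {n : ℕ} (F : Submodule ℝ (Fin n → ℝ)) : Submodule ℝ (Fin n → ℝ) where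
  carrier := {x | ∀ v ∈ F, v ⬝ᵥ x = 0}
  zero_mem' := by intro v hv; simp
  add_mem' := by intro a b ha hb v hv; simp [dotProduct_add, ha v hv, hb v hv]
  smul_mem' := by intro c x hx v hv; simp [dotProduct_smul, hx v hv]

/-- `A` is `β`-delocalized: no level set of a nonzero null vector (of `A` or `Aᵀ`)
has more than `β` coordinates. -/
def Delocalized {n : ℕ} (β : ℝ) (A : Matrix (Fin n) (Fin n) ℝ) : Prop :=
  ∀ x : Fin n → ℝ, x ≠ 0 →
    (x ∈ LinearMap.ker A.mulVecLin ∨ x ∈ LinearMap.ker Aᵀ.mulVecLin) →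
    ∀ lam : ℝ, ({i : Fin n | x i = lam}.ncard : ℝ) ≤ β

/-- for a symmetric matrix with constant row sums `d`, `0 < d < n`, the
matrices `J_n - M` and `M` have the same rank; in particular one is invertible iff the
other is. -/
theorem stmt_18 (n : ℕ) (M : Matrix (Fin n) (Fin n) ℝ) (hM : M.IsSymm)
    (d : ℝ) (hd : 0 < d) (hdn : d < n)
    (hreg : M.mulVec (fun _ => 1) = fun _ => d) :
    ((Matrix.of fun _ _ : Fin n => (1 : ℝ)) - M).rank = M.rank ∧
    (IsUnit ((Matrix.of fun _ _ : Fin n => (1 : ℝ)) - M) ↔ IsUnit M) := by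
  set J : Matrix (Fin n) (Fin n) ℝ := Matrix.of fun _ _ => (1 : ℝ) with hJ
  -- 𝟙 ᵥ* M = d • 𝟙
  have hvm : (fun _ => (1:ℝ)) ᵥ* M = fun _ => d := by
    have := congrArg transpose hM
    rw [Matrix.IsSymm] at hM
    funext j
    have : ((fun _ => (1:ℝ)) ᵥ* M) j = (M.mulVec (fun _ => 1)) j := by
      simp [Matrix.vecMul, Matrix.mulVec, dotProduct]
      exact Finset.sum_congr rfl fun i _ => by
        have := congrFun (congrFun hM i) j
        simp [Matrix.transpose_apply] at this
        rw [this]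
    rw [this, hreg]
  -- key: 𝟙 ⬝ (M x) = d * ∑ x
  have key : ∀ x : Fin n → ℝ, (fun _ => (1:ℝ)) ⬝ᵥ M.mulVec x = d * ∑ j, x j := by
    intro x
    rw [Matrix.dotProduct_mulVec, hvm]
    simp [dotProduct, Finset.mul_sum]
  have hJx : ∀ x : Fin n → ℝ, J.mulVec x = fun _ => ∑ j, x j := by
    intro x; funext i; simp [hJ, Matrix.mulVec, dotProduct]
  -- kernels are equal
  have hker : LinearMap.ker (J - M).mulVecLin = LinearMap.ker M.mulVecLin := by
    ext x
    simp only [LinearMap.mem_ker, Matrix.mulVecLin_apply, Matrix.sub_mulVec]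
    constructor
    · intro h
      have hMx : M.mulVec x = J.mulVec x := by
        have := sub_eq_zero.mp h; exact this.symm
      have h1 := key x
      rw [hMx, hJx] at h1
      simp [dotProduct, Finset.sum_const] at h1
      have hs : ∑ j, x j = 0 := by
        rcases h1 with h1 | h1
        · linarith
        · exact h1
      rw [hMx, hJx, hs]
      funext i; simp
    · intro h
      have hs : d * ∑ j, x j = 0 := by rw [← key x, h]; simp
      have hs0 : ∑ j, x j = 0 := by
        rcases mul_eq_zero.mp hs with h' | h'
        · linarith
        · exact h'
      rw [h, hJx, hs0]
      funext i; simp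
  have hrank : (J - M).rank = M.rank := by
    have h1 := LinearMap.finrank_range_add_finrank_ker (J - M).mulVecLin
    have h2 := LinearMap.finrank_range_add_finrank_ker M.mulVecLin
    rw [hker] at h1
    unfold Matrix.rank
    omega
  refine ⟨hrank, ?_⟩
  rw [← Matrix.mulVec_injective_iff_isUnit, ← Matrix.mulVec_injective_iff_isUnit]
  have : ∀ A : Matrix (Fin n) (Fin n) ℝ,
      Function.Injective A.mulVec ↔ LinearMap.ker A.mulVecLin = ⊥ := by
    intro A
    exact (LinearMap.ker_eq_bot (f := A.mulVecLin)).symm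
  rw [this, this, hker]
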